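/- arXiv:1311.7171 — 5 statements merged into one kernel-verified Lean document; each statement's English description precedes it below -/
import Mathlib

section
/- Define S_m(a,b) recursively for positive integers b < a by: if b ∣ a then S_m(a,b) = a/b; otherwise write a = b·q + ε·r with 0 < 2r ≤ b, ε = ±1, choosing ε = +1 when 2r = b, and set S_m(a,b) = q + 1 + S_m(b,r). Then for all positive integers a, b with 2b < a, one has S_m(a,b) + 1 = S_m(a, a − b). -/
/-- `Sm a b` is the step count of the method of least absolute remainders on `(a, b)`:
if `b ∣ a` then `Sm a b = a / b`; otherwise write `a = b * q + ε * r` with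
`0 < 2 * r ≤ b`, `ε = ±1` (choosing `ε = +1` when `2 * r = b`), and set
`Sm a b = q + 1 + Sm b r`. -/
def Sm (a b : ℕ) : ℕ :=
  if hb : b = 0 then 0
  else if hd : b ∣ a then a / b
  else if 2 * (a % b) ≤ b then
    a / b + 1 + Sm b (a % b)
  else
    (a / b + 1) + 1 + Sm b (b - a % b)
termination_by b
decreasing_by
  · exact Nat.mod_lt a (Nat.pos_of_ne_zero hb)
  · exact Nat.sub_lt (Nat.pos_of_ne_zero hb)
      (Nat.pos_of_ne_zero fun h => hd (Nat.dvd_of_mod_eq_zero h))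

theorem sm_shift (a b : ℕ) (hb : 0 < b) : Sm (a + b) b = Sm a b + 1 := by
  have hb0 : b ≠ 0 := hb.ne'
  conv_lhs => rw [Sm]
  conv_rhs => rw [Sm]
  simp only [hb0, dite_false, Nat.add_mod_right, Nat.add_div_right a hb,
    Nat.dvd_add_self_right, dif_neg]
  by_cases hd : b ∣ a
  · simp [hd]
  · simp only [hd, dite_false, dif_neg]
    split <;> ring

/-- For all positive integers `a`, `b` with `2 * b < a`,
`Sm a b + 1 = Sm a (a - b)`. -/
theorem sm_sub (a b : ℕ) (hb : 0 < b) (hab : 2 * b < a) :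
    Sm a b + 1 = Sm a (a - b) := by
  induction a using Nat.strong_induction_on generalizing b with
  | _ a ih =>
  have hmod : a % (a - b) = b := by
    rw [Nat.mod_eq_sub_mod (by omega)]
    have h1 : a - (a - b) = b := by omega
    rw [h1, Nat.mod_eq_of_lt (by omega)]
  have hdiv : a / (a - b) = 1 := Nat.div_eq_of_lt_le (by omega) (by omega)
  have hnd : ¬ (a - b) ∣ a := by
    intro h
    have := Nat.mod_eq_zero_of_dvd h
    omega
  conv_rhs => rw [Sm]
  simp only [show a - b ≠ 0 by omega, dite_false, hnd, hmod, hdiv, dif_neg]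
  by_cases h3 : 3 * b ≤ a
  · -- Case A: 2 * b ≤ a - b, positive-remainder branch on the right
    rw [if_pos (by omega)]
    have hacb : a = (a - b) + b := by omega
    rw [show Sm a b = Sm ((a - b) + b) b by rw [← hacb], sm_shift (a - b) b hb]
    ring
  · -- Case B: 2 * b < a < 3 * b
    rw [if_neg (by omega)]
    have hq : a / b = 2 := Nat.div_eq_of_lt_le (by omega) (by omega)
    have hr : a % b = a - 2 * b := by
      have h := Nat.div_add_mod a b
      rw [hq] at h
      omega
    have hr0 : 0 < a - 2 * b := by omega
    have hbnd : ¬ b ∣ a := fun h => by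
      have := Nat.mod_eq_zero_of_dvd h
      omega
    have hcb : a - b - b = a - 2 * b := by omega
    rw [hcb, show a - b = b + (a - 2 * b) by omega, sm_shift b (a - 2 * b) hr0]
    conv_lhs => rw [Sm]
    simp only [hb.ne', dite_false, hbnd, hr, hq, dif_neg]
    by_cases hhalf : 2 * (a - 2 * b) ≤ b
    · rw [if_pos hhalf]
      ring
    · rw [if_neg hhalf]
      have hs0 : 0 < b - (a - 2 * b) := by omega
      have hs2 : 2 * (b - (a - 2 * b)) < b := by omega
      have hih := ih b (by omega) (b - (a - 2 * b)) hs0 hs2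
      have hbs : b - (b - (a - 2 * b)) = a - 2 * b := by omega
      rw [hbs] at hih
      omega
end

section
/- Let a > b be positive integers. The step count of the regular Euclidean algorithm on (a,b) equals the step count of the method of least absolute remainders on (a,b). That is, if the regular algorithm produces n divisions with quotients q₁,…,q_n and the least-absolute-remainder method produces m divisions with quotients p₁,…,p_m, then (n−1) + Σ q_j = (m−1) + Σ p_j. -/
/-- A generalized Euclidean algorithm on the pair `(a, b)`:
a sequence of equations `x (i-1) = x i * p i + ε (i+1) * x (i+1)` for `i = 1, …, m`,
with positive quotients `p i`, signs `ε i = ±1`, strictly decreasing positive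
remainders, and final remainder `x (m+1) = 0`. -/
structure GenEuclid (a b : ℕ) where
  m : ℕ
  x : ℕ → ℕ
  p : ℕ → ℕ
  ε : ℕ → ℤ
  hm : 1 ≤ m
  hx0 : x 0 = a
  hx1 : x 1 = b
  hxm1 : x (m + 1) = 0
  hpos : ∀ i, i ≤ m → 0 < x i
  hdec : ∀ i, 1 ≤ i → i ≤ m → x (i + 1) < x i
  hp : ∀ i, 1 ≤ i → i ≤ m → 1 ≤ p i
  hε : ∀ i, 2 ≤ i → i ≤ m → ε i = 1 ∨ ε i = -1
  heq : ∀ i, 1 ≤ i → i ≤ m → (x (i - 1) : ℤ) = x i * p i + ε (i + 1) * x (i + 1)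

/-- The step count of a generalized Euclidean algorithm:
the sum of all quotients (total subtractions) plus the number of divisions minus one
(the swaps). -/
def GenEuclid.steps {a b : ℕ} (E : GenEuclid a b) : ℕ :=
  (E.m - 1) + ∑ i ∈ Finset.Icc 1 E.m, E.p i

/-- The regular Euclidean algorithm: all remainders are taken with sign `+1`. -/
def GenEuclid.IsRegular {a b : ℕ} (E : GenEuclid a b) : Prop :=
  ∀ i, 2 ≤ i → i ≤ E.m → E.ε i = 1

/-- The method of least absolute remainders: at each division the remainder of least
absolute value is chosen, i.e. `2 * x (i+1) ≤ x i`, with ties (remainder exactly half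
the divisor) broken in favor of the positive remainder. -/
def GenEuclid.IsLAR {a b : ℕ} (E : GenEuclid a b) : Prop :=
  ∀ i, 1 ≤ i → i ≤ E.m →
    2 * E.x (i + 1) ≤ E.x i ∧ (2 * E.x (i + 1) = E.x i → E.ε (i + 1) = 1)

/-- The method of least absolute remainders (no tie-breaking condition):
at every step `2 * x (i+1) ≤ x i`. -/
def GenEuclid.IsLAR' {a b : ℕ} (E : GenEuclid a b) : Prop :=
  ∀ i, 1 ≤ i → i ≤ E.m → 2 * E.x (i + 1) ≤ E.x i

def euf : ℕ → ℕ → ℕ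
  | a, b =>
    if h : b = 0 then 0
    else if b ∣ a then a / b
    else a / b + 1 + euf b (a % b)
  termination_by a b => b
  decreasing_by exact Nat.mod_lt _ (Nat.pos_of_ne_zero h)

lemma euf_dvd {a b : ℕ} (hb : b ≠ 0) (hd : b ∣ a) : euf a b = a / b := by
  rw [euf]; simp [hb, hd]

lemma euf_not_dvd {a b : ℕ} (hb : b ≠ 0) (hd : ¬ b ∣ a) :
    euf a b = a / b + 1 + euf b (a % b) := by
  rw [euf]; simp [hb, hd]

lemma euf_add (r s : ℕ) (hs : 0 < s) : euf (r + s) s = 1 + euf r s := by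
  have hs' : s ≠ 0 := hs.ne'
  by_cases hd : s ∣ r
  · rw [euf_dvd hs' (by exact (Nat.dvd_add_self_right).mpr hd),
      euf_dvd hs' hd, Nat.add_div_right _ hs]
    omega
  · rw [euf_not_dvd hs' (by simpa [Nat.dvd_add_self_right] using hd),
      euf_not_dvd hs' hd, Nat.add_div_right _ hs, Nat.add_mod_right]
    omega

def GenEuclid.tail {a b : ℕ} (E : GenEuclid a b) (h2 : 2 ≤ E.m) :
    GenEuclid b (E.x 2) where
  m := E.m - 1
  x := fun i => E.x (i + 1)
  p := fun i => E.p (i + 1)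
  ε := fun i => E.ε (i + 1)
  hm := by omega
  hx0 := E.hx1
  hx1 := rfl
  hxm1 := by
    show E.x (E.m - 1 + 1 + 1) = 0
    have : E.m - 1 + 1 + 1 = E.m + 1 := by omega
    rw [this]; exact E.hxm1
  hpos := fun i hi => E.hpos (i + 1) (by omega)
  hdec := fun i h1 hi => E.hdec (i + 1) (by omega) (by omega)
  hp := fun i h1 hi => E.hp (i + 1) (by omega) (by omega)
  hε := fun i h1 hi => E.hε (i + 1) (by omega) (by omega)
  heq := fun i h1 hi => by
    show (E.x (i - 1 + 1) : ℤ) = E.x (i + 1) * E.p (i + 1) + E.ε (i + 1 + 1) * E.x (i + 1 + 1)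
    have h := E.heq (i + 1) (by omega) (by omega)
    have hii : i - 1 + 1 = i + 1 - 1 := by omega
    rw [hii]; exact h

lemma GenEuclid.tail_steps {a b : ℕ} (E : GenEuclid a b) (h2 : 2 ≤ E.m) :
    E.steps = E.p 1 + 1 + (E.tail h2).steps := by
  unfold GenEuclid.steps
  have htm : (E.tail h2).m = E.m - 1 := rfl
  have hins : Finset.Icc 1 E.m = insert 1 (Finset.Icc 2 E.m) := by
    ext i; simp; omega
  have hsum : ∑ i ∈ Finset.Icc 1 (E.m - 1), (E.tail h2).p i
      = ∑ i ∈ Finset.Icc 2 E.m, E.p i := by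
    have : Finset.Icc 2 E.m = (Finset.Icc 1 (E.m - 1)).image (· + 1) := by
      ext i; simp; omega
    rw [this, Finset.sum_image (by intro x _ y _ h; have h' : x + 1 = y + 1 := h; omega)]
    rfl
  rw [htm, hins, Finset.sum_insert (by simp), hsum]
  omega

lemma GenEuclid.tail_reg {a b : ℕ} (E : GenEuclid a b) (h2 : 2 ≤ E.m)
    (h : E.IsRegular) : (E.tail h2).IsRegular :=
  fun i hi hi' => h (i + 1) (by omega) (by
    have : (E.tail h2).m = E.m - 1 := rfl
    omega)

lemma GenEuclid.tail_lar {a b : ℕ} (E : GenEuclid a b) (h2 : 2 ≤ E.m)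
    (h : E.IsLAR) : (E.tail h2).IsLAR :=
  fun i hi hi' => h (i + 1) (by omega) (by
    have : (E.tail h2).m = E.m - 1 := rfl
    omega)

lemma key : ∀ b, 0 < b → ∀ a, b < a → ∀ E : GenEuclid a b,
    (E.IsRegular ∨ E.IsLAR) → E.steps = euf a b := by
  intro b
  induction b using Nat.strong_induction_on with
  | _ b ih =>
    intro hb a hba E hRL
    have hb' : b ≠ 0 := hb.ne'
    have heq1 := E.heq 1 le_rfl E.hm
    rw [E.hx1] at heq1
    simp only [Nat.sub_self] at heq1
    rw [E.hx0] at heq1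
    have hp1 : 1 ≤ E.p 1 := E.hp 1 le_rfl E.hm
    by_cases hm1 : E.m = 1
    · -- one step: b ∣ a
      have hx2 : E.x 2 = 0 := by have := E.hxm1; rwa [hm1] at this
      rw [hx2] at heq1
      push_cast at heq1
      have hab : a = b * E.p 1 := by exact_mod_cast (by linarith : (a : ℤ) = b * E.p 1)
      have hdvd : b ∣ a := ⟨E.p 1, hab⟩
      rw [euf_dvd hb' hdvd]
      have hdiv : a / b = E.p 1 := Nat.div_eq_of_eq_mul_right hb hab
      unfold GenEuclid.steps
      rw [hm1, hdiv]
      simp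
    · have h2m : 2 ≤ E.m := by have := E.hm; omega
      have hx2pos : 0 < E.x 2 := E.hpos 2 h2m
      have hx2lt : E.x 2 < b := by
        have := E.hdec 1 le_rfl E.hm
        rwa [E.hx1] at this
      set c := E.x 2 with hc
      have hIH := ih c hx2lt hx2pos b hx2lt (E.tail h2m)
        (by rcases hRL with h | h
            · exact Or.inl (E.tail_reg h2m h)
            · exact Or.inr (E.tail_lar h2m h))
      rw [E.tail_steps h2m, hIH]
      -- now case on ε 2
      have hε2 : E.ε 2 = 1 ∨ E.ε 2 = -1 := E.hε 2 le_rfl h2m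
      have hcase : E.ε 2 = 1 ∨ (E.ε 2 = -1 ∧ 2 * c < b) := by
        rcases hRL with h | h
        · exact Or.inl (h 2 le_rfl h2m)
        · rcases h 1 le_rfl E.hm with ⟨hle, htie⟩
          rw [E.hx1] at hle htie
          rcases hε2 with h1 | h1
          · exact Or.inl h1
          · refine Or.inr ⟨h1, lt_of_le_of_ne hle fun hh => ?_⟩
            rw [htie hh] at h1; norm_num at h1
      rcases hcase with hε2' | ⟨hε2', hlt⟩
      · -- positive remainder step
        rw [hε2'] at heq1
        have hab : a = b * E.p 1 + c := by
          exact_mod_cast (by push_cast at heq1 ⊢; linarith : (a : ℤ) = b * E.p 1 + c)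
        have hdm : a / b = E.p 1 ∧ a % b = c := (Nat.div_mod_unique hb).mpr ⟨by omega, hx2lt⟩
        have hnd : ¬ b ∣ a := by
          rw [Nat.dvd_iff_mod_eq_zero]; omega
        rw [euf_not_dvd hb' hnd, hdm.2, hdm.1]
      · -- negative remainder step
        rw [hε2'] at heq1
        have hab : a + c = b * E.p 1 := by
          exact_mod_cast (by push_cast at heq1 ⊢; linarith : ((a : ℤ) + c) = b * E.p 1)
        have hp2 : 2 ≤ E.p 1 := by nlinarith
        set r := b - c with hr
        have hrb : r < b := by omega
        have hcr : c < r := by omega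
        have hab2 : a = b * (E.p 1 - 1) + r := by
          have : b * E.p 1 = b * (E.p 1 - 1) + b := by
            rw [← Nat.mul_succ]; congr 1; omega
          omega
        have hdm : a / b = E.p 1 - 1 ∧ a % b = r := (Nat.div_mod_unique hb).mpr
          ⟨by omega, hrb⟩
        have hrpos : 0 < r := by omega
        have hnd : ¬ b ∣ a := by
          rw [Nat.dvd_iff_mod_eq_zero]; omega
        rw [euf_not_dvd hb' hnd, hdm.2, hdm.1]
        -- euf b r = 2 + euf r c
        have hbr : b = r * 1 + c := by omega
        have hdm2 : b / r = 1 ∧ b % r = c := (Nat.div_mod_unique hrpos).mpr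
          ⟨by omega, hcr⟩
        have hnd2 : ¬ r ∣ b := by
          rw [Nat.dvd_iff_mod_eq_zero]; omega
        have h1 : euf b r = 2 + euf r c := by
          rw [euf_not_dvd hrpos.ne' hnd2, hdm2.2, hdm2.1]
        have h2 : euf b c = 1 + euf r c := by
          have : b = r + c := by omega
          rw [this, euf_add r c hx2pos]
        rw [h1, h2]
        omega


/-- For positive integers `a > b`, the step count of the regular Euclidean algorithm
on `(a, b)` equals the step count of the method of least absolute remainders. -/
theorem regular_steps_eq_lar_steps (a b : ℕ) (hb : 0 < b) (hba : b < a)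
    (R L : GenEuclid a b) (hR : R.IsRegular) (hL : L.IsLAR) :
    (R.m - 1) + ∑ j ∈ Finset.Icc 1 R.m, R.p j
      = (L.m - 1) + ∑ j ∈ Finset.Icc 1 L.m, L.p j := by
  have h1 := key b hb a hba R (Or.inl hR)
  have h2 := key b hb a hba L (Or.inr hL)
  unfold GenEuclid.steps at h1 h2
  omega
end

section
/- Let a > b be positive integers, let m be the number of divisions performed by the method of least absolute remainders on (a,b), and let m' be the number of divisions performed by any generalized Euclidean algorithm on (a,b). Then m ≤ m' (Kronecker's theorem). -/
namespace GenEuclid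

/-- Change the (propositionally equal) endpoints of a `GenEuclid`. -/
def retarget {a b a' b' : ℕ} (E : GenEuclid a b) (ha : a' = a) (hb : b' = b) :
    GenEuclid a' b' :=
  { E with hx0 := by rw [E.hx0, ha], hx1 := by rw [E.hx1, hb] }

@[simp] lemma retarget_m {a b a' b' : ℕ} (E : GenEuclid a b) (ha : a' = a) (hb : b' = b) :
    (E.retarget ha hb).m = E.m := rfl

/-- The tail of a generalized Euclidean algorithm with at least two steps. -/
def tail_s5 {a b : ℕ} (E : GenEuclid a b) (h : 2 ≤ E.m) : GenEuclid (E.x 1) (E.x 2) where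
  m := E.m - 1
  x := fun i => E.x (i + 1)
  p := fun i => E.p (i + 1)
  ε := fun i => E.ε (i + 1)
  hm := by omega
  hx0 := rfl
  hx1 := rfl
  hxm1 := by
    show E.x (E.m - 1 + 1 + 1) = 0
    have h1 : E.m - 1 + 1 + 1 = E.m + 1 := by omega
    rw [h1, E.hxm1]
  hpos := fun i hi => E.hpos (i + 1) (by omega)
  hdec := fun i h1 h2 => E.hdec (i + 1) (by omega) (by omega)
  hp := fun i h1 h2 => E.hp (i + 1) (by omega) (by omega)
  hε := fun i h1 h2 => E.hε (i + 1) (by omega) (by omega)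
  heq := fun i h1 h2 => by
    have hF := E.heq (i + 1) (by omega) (by omega)
    have e1 : i + 1 - 1 = i - 1 + 1 := by omega
    rw [e1] at hF
    exact hF

@[simp] lemma tail_m {a b : ℕ} (E : GenEuclid a b) (h : 2 ≤ E.m) : (E.tail_s5 h).m = E.m - 1 := rfl

/-- Add the second entry to the first entry: from an algorithm on `(c, d)` build one
on `(c + d, d)` by increasing the first quotient by one. -/
def addFirst {c d : ℕ} (F : GenEuclid c d) : GenEuclid (c + d) d where
  m := F.m
  x := fun i => match i with
    | 0 => c + d
    | (j + 1) => F.x (j + 1)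
  p := fun i => match i with
    | 1 => F.p 1 + 1
    | i => F.p i
  ε := F.ε
  hm := F.hm
  hx0 := rfl
  hx1 := F.hx1
  hxm1 := F.hxm1
  hpos := fun i hi => by
    match i with
    | 0 =>
      have h0 := F.hpos 0 (by omega)
      rw [F.hx0] at h0
      show 0 < c + d
      omega
    | (j + 1) => exact F.hpos (j + 1) hi
  hdec := fun i h1 h2 => by
    match i with
    | (j + 1) => exact F.hdec (j + 1) h1 h2
  hp := fun i h1 h2 => by
    match i with
    | 1 => show 1 ≤ F.p 1 + 1; omega
    | (j + 2) => exact F.hp (j + 2) h1 h2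
  hε := F.hε
  heq := fun i h1 h2 => by
    match i with
    | 1 =>
      show ((c + d : ℕ) : ℤ) = F.x 1 * (F.p 1 + 1) + F.ε 2 * F.x 2
      have hF := F.heq 1 h1 h2
      rw [F.hx0] at hF
      rw [F.hx1]
      push_cast at hF ⊢
      rw [F.hx1] at hF
      push_cast at hF
      nlinarith [hF]
    | (j + 2) =>
      show (F.x (j + 1) : ℤ) = F.x (j + 2) * F.p (j + 2) + F.ε (j + 3) * F.x (j + 3)
      have hF := F.heq (j + 2) h1 h2
      exact hF

@[simp] lemma addFirst_m {c d : ℕ} (F : GenEuclid c d) : F.addFirst.m = F.m := rfl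

/-- From an algorithm on `(c, c - d)` with first quotient at least `2`, where
`d < c < 2 * d`, build an algorithm on `(c + d, d)` with one more step, starting
`c + d = 2 * d + (c - d)`. -/
def twoStep (c d : ℕ) (F : GenEuclid c (c - d)) (h1 : d < c) (h2 : c < 2 * d)
    (hq : 2 ≤ F.p 1) : GenEuclid (c + d) d where
  m := F.m + 1
  x := fun i => match i with
    | 0 => c + d
    | 1 => d
    | (j + 2) => F.x (j + 1)
  p := fun i => match i with
    | 0 => F.p 0
    | 1 => 2
    | 2 => F.p 1 - 1
    | (j + 3) => F.p (j + 2)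
  ε := fun i => match i with
    | 2 => 1
    | i => F.ε (i - 1)
  hm := by omega
  hx0 := rfl
  hx1 := rfl
  hxm1 := by
    show F.x (F.m + 1 + 1 - 1) = 0
    have e : F.m + 1 + 1 - 1 = F.m + 1 := by omega
    rw [e, F.hxm1]
  hpos := fun i hi => by
    match i with
    | 0 => show 0 < c + d; omega
    | 1 => show 0 < d; omega
    | (j + 2) => exact F.hpos (j + 1) (by omega)
  hdec := fun i hi1 hi2 => by
    match i with
    | 1 =>
      show F.x 1 < d
      rw [F.hx1]
      omega
    | (j + 2) =>
      show F.x (j + 2) < F.x (j + 1)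
      exact F.hdec (j + 1) (by omega) (by omega)
  hp := fun i hi1 hi2 => by
    match i with
    | 1 => show 1 ≤ 2; omega
    | 2 => show 1 ≤ F.p 1 - 1; omega
    | (j + 3) => exact F.hp (j + 2) (by omega) (by omega)
  hε := fun i hi1 hi2 => by
    match i with
    | 2 => left; rfl
    | (j + 3) =>
      show F.ε (j + 2) = 1 ∨ F.ε (j + 2) = -1
      exact F.hε (j + 2) (by omega) (by omega)
  heq := fun i hi1 hi2 => by
    match i with
    | 1 =>
      show ((c + d : ℕ) : ℤ) = d * 2 + 1 * F.x 1
      rw [F.hx1]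
      have hcd : ((c - d : ℕ) : ℤ) = (c : ℤ) - d := by
        rw [Nat.cast_sub h1.le]
      rw [hcd]
      push_cast
      ring
    | 2 =>
      show (d : ℤ) = F.x 1 * (F.p 1 - 1 : ℕ) + F.ε 2 * F.x 2
      have hF := F.heq 1 (by omega) (by omega)
      rw [F.hx0, F.hx1] at hF
      rw [F.hx1]
      have hcd : ((c - d : ℕ) : ℤ) = (c : ℤ) - d := by
        rw [Nat.cast_sub h1.le]
      have hq' : ((F.p 1 - 1 : ℕ) : ℤ) = (F.p 1 : ℤ) - 1 := by
        rw [Nat.cast_sub (by omega : 1 ≤ F.p 1)]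
        push_cast; ring
      rw [hcd] at hF
      rw [hq']
      nlinarith [hF]
    | (j + 3) =>
      show (F.x (j + 1) : ℤ) = F.x (j + 2) * F.p (j + 2) + F.ε (j + 3) * F.x (j + 3)
      exact F.heq (j + 2) (by omega) (by omega)

@[simp] lemma twoStep_m (c d : ℕ) (F : GenEuclid c (c - d)) (h1 : d < c) (h2 : c < 2 * d)
    (hq : 2 ≤ F.p 1) : (twoStep c d F h1 h2 hq).m = F.m + 1 := rfl


lemma retarget_isLAR' {a b a' b' : ℕ} (E : GenEuclid a b) (ha : a' = a) (hb : b' = b)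
    (h : E.IsLAR') : (E.retarget ha hb).IsLAR' := h

lemma tail_isLAR' {a b : ℕ} (L : GenEuclid a b) (h2 : 2 ≤ L.m) (h : L.IsLAR') :
    (L.tail_s5 h2).IsLAR' := fun i h1 h2' => h (i + 1) (by omega) (by
      have : i ≤ L.m - 1 := h2'
      omega)

/-- Complement lemma: if there is a generalized Euclidean algorithm on `(b, c)` with
`c < b ≤ 2c`, then there is one on `(b, b - c)` with at most as many steps. -/
theorem comp : ∀ k (b c : ℕ) (E : GenEuclid b c), E.m ≤ k → c < b → b ≤ 2 * c →
    ∃ F : GenEuclid b (b - c), F.m ≤ E.m := by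
  intro k
  induction k with
  | zero => intro b c E hk hcb hb2c; exact absurd (le_trans E.hm hk) (by omega)
  | succ k ih =>
    intro b c E hk hcb hb2c
    rcases eq_or_lt_of_le hb2c with heq2 | hlt
    · exact ⟨E.retarget rfl (by omega), le_refl _⟩
    set d := b - c with hd
    have hd1 : 0 < d := by omega
    have hdc : d < c := by omega
    -- E has at least two steps
    have hm2 : 2 ≤ E.m := by
      by_contra h
      have hm1 : E.m = 1 := by have := E.hm; omega
      have h2 : E.x 2 = 0 := by
        have := E.hxm1; rw [hm1] at this; exact this
      have hF := E.heq 1 (le_refl _) (by omega)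
      rw [E.hx0, E.hx1] at hF
      have hx2 : E.x (1 + 1) = 0 := h2
      rw [hx2] at hF
      simp at hF
      have hFn : b = c * E.p 1 := by exact_mod_cast hF
      have hp1 := E.hp 1 (by omega) (by omega)
      rcases Nat.lt_or_ge (E.p 1) 2 with hP | hP
      · have : E.p 1 = 1 := by omega
        rw [this] at hFn; omega
      · have : c * 2 ≤ c * E.p 1 := Nat.mul_le_mul_left c hP
        omega
    have hc2c : E.x 2 < c := by
      have := E.hdec 1 (le_refl _) (by omega)
      rw [E.hx1] at this; exact this
    have hε2 := E.hε 2 (le_refl _) hm2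
    have hF := E.heq 1 (by omega) (by omega)
    rw [E.hx0, E.hx1] at hF
    -- determine the first step
    have key : (E.p 1 = 1 ∧ E.x 2 = d) ∨ (E.p 1 = 2 ∧ E.x 2 = c - d) := by
      have hP3 : E.p 1 ≤ 2 := by
        by_contra hP
        push_neg at hP
        have h3 : (3:ℤ) ≤ E.p 1 := by exact_mod_cast hP
        have hc0 : (0:ℤ) ≤ (c:ℤ) := by positivity
        have hcc2 : (E.x 2 : ℤ) < c := by exact_mod_cast hc2c
        have hbb : (b:ℤ) < 2 * c := by exact_mod_cast hlt
        have hcb' : (c:ℤ) < b := by exact_mod_cast hcb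
        rcases hε2 with e | e <;> rw [e] at hF <;> nlinarith
      have hp1 := E.hp 1 (by omega) (by omega)
      have hx2nn : (0:ℤ) ≤ (E.x 2 : ℤ) := by positivity
      have hcc2 : (E.x 2 : ℤ) < c := by exact_mod_cast hc2c
      interval_cases hP : E.p 1
      · rcases hε2 with e | e <;> rw [e] at hF
        · left
          refine ⟨rfl, ?_⟩
          have : (E.x 2 : ℤ) = (b : ℤ) - c := by push_cast at hF ⊢; linarith
          omega
        · exfalso
          have : (E.x 2 : ℤ) = (c : ℤ) - b := by push_cast at hF ⊢; linarith
          omega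
      · rcases hε2 with e | e <;> rw [e] at hF
        · exfalso
          have : (E.x 2 : ℤ) = (b : ℤ) - 2 * c := by push_cast at hF ⊢; linarith
          omega
        · right
          refine ⟨rfl, ?_⟩
          have : (E.x 2 : ℤ) = 2 * (c : ℤ) - b := by push_cast at hF ⊢; linarith
          omega
    rcases key with ⟨hP, hX⟩ | ⟨hP, hX⟩
    · refine ⟨(((E.tail_s5 hm2).retarget E.hx1.symm hX.symm).addFirst).retarget (by omega) rfl, ?_⟩
      simp only [retarget_m, addFirst_m, tail_m]
      omega
    · rcases le_or_gt c (2 * (c - d)) with hcase | hcase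
      · obtain ⟨F, hFm⟩ := ih c (c - d) ((E.tail_s5 hm2).retarget E.hx1.symm hX.symm)
          (by simp only [retarget_m, tail_m]; omega) (by omega) hcase
        refine ⟨((F.retarget rfl (by omega)).addFirst).retarget (by omega) rfl, ?_⟩
        simp only [retarget_m, addFirst_m, tail_m] at hFm ⊢
        omega
      · have hc2d : c < 2 * d := by omega
        have hq : 2 ≤ E.p 2 := by
          by_contra hq
          have hp2 := E.hp 2 (by omega) hm2
          have hp21 : E.p 2 = 1 := by omega
          have hF2 := E.heq 2 (by omega) hm2
          rw [E.hx1, hX, hp21] at hF2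
          have hx3 : E.x 3 < c - d := by
            have := E.hdec 2 (by omega) hm2
            rw [hX] at this; exact this
          have hεx : E.ε 3 * E.x 3 = (d : ℤ) := by
            have hcd : ((c - d : ℕ) : ℤ) = (c : ℤ) - d := by
              rw [Nat.cast_sub hdc.le]
            rw [hcd] at hF2
            push_cast at hF2 ⊢
            linarith
          rcases Nat.lt_or_ge E.m 3 with h3 | h3
          · have hm3 : E.m = 2 := by omega
            have : E.x 3 = 0 := by
              have := E.hxm1; rw [hm3] at this; exact this
            rw [this] at hεx
            simp at hεx
            omega
          · have hε3 := E.hε 3 (by omega) h3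
            rcases hε3 with e | e <;> rw [e] at hεx <;> push_cast at hεx <;> omega
        refine ⟨(twoStep c d ((E.tail_s5 hm2).retarget E.hx1.symm hX.symm) hdc hc2d hq).retarget
          (by omega) rfl, ?_⟩
        simp only [retarget_m, twoStep_m, tail_m]
        show E.m - 1 + 1 ≤ E.m
        omega


/-- Main induction: the least-absolute-remainder algorithm uses the fewest divisions. -/
theorem kron_aux : ∀ k (a b : ℕ) (E L : GenEuclid a b), E.m ≤ k → L.IsLAR' →
    L.m ≤ E.m := by
  intro k
  induction k with
  | zero => intro a b E L hk hL; exact absurd (le_trans E.hm hk) (by omega)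
  | succ k ih =>
    intro a b E L hk hL
    rcases Nat.lt_or_ge L.m 2 with hLm | hLm
    · exact le_trans (by omega) E.hm
    set d := L.x 2 with hdd
    have hd0 : 0 < d := L.hpos 2 hLm
    have hdb : d < b := by
      have := L.hdec 1 (le_refl _) (by omega)
      rw [L.hx1] at this; exact this
    have h2d : 2 * d ≤ b := by
      have := hL 1 (le_refl _) (by omega)
      rw [L.hx1] at this; exact this
    have hεL := L.hε 2 (le_refl _) hLm
    have hFL := L.heq 1 (by omega) (by omega)
    rw [L.hx0, L.hx1] at hFL
    -- E has at least two steps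
    have hEm2 : 2 ≤ E.m := by
      by_contra h
      have hm1 : E.m = 1 := by have := E.hm; omega
      have h2 : E.x 2 = 0 := by
        have := E.hxm1; rw [hm1] at this; exact this
      have hFE := E.heq 1 (le_refl _) (by omega)
      rw [E.hx0, E.hx1] at hFE
      have hx2 : E.x (1 + 1) = 0 := h2
      rw [hx2] at hFE
      have hdvd0 : L.ε 2 * d = (b : ℤ) * ((E.p 1 : ℤ) - L.p 1) := by
        push_cast at hFE
        linear_combination hFE - hFL
      have hdvd : (b : ℤ) ∣ (d : ℤ) := by
        rcases hεL with e | e <;> rw [e] at hdvd0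
        · exact ⟨(E.p 1 : ℤ) - L.p 1, by linear_combination hdvd0⟩
        · exact ⟨-((E.p 1 : ℤ) - (L.p 1 : ℤ)), by linear_combination -hdvd0⟩
      have := Int.le_of_dvd (by exact_mod_cast hd0) hdvd
      have : b ≤ d := by exact_mod_cast this
      omega
    set c := E.x 2 with hcc
    have hc0 : 0 < c := E.hpos 2 hEm2
    have hcb : c < b := by
      have := E.hdec 1 (le_refl _) (by omega)
      rw [E.hx1] at this; exact this
    have hεE := E.hε 2 (le_refl _) hEm2
    have hFE := E.heq 1 (by omega) (by omega)
    rw [E.hx0, E.hx1] at hFE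
    -- the two possible first remainders agree or are complementary
    have hcd : c = d ∨ c + d = b := by
      have hkey : L.ε 2 * d - E.ε 2 * c = (b : ℤ) * ((E.p 1 : ℤ) - (L.p 1 : ℤ)) := by
        linear_combination hFE - hFL
      set t : ℤ := (E.p 1 : ℤ) - L.p 1 with ht
      have hb0 : (0 : ℤ) < b := by exact_mod_cast Nat.lt_of_lt_of_le hd0 (by omega)
      have habs : |(b : ℤ) * t| < 2 * b := by
        rw [← hkey]
        have h1 : |L.ε 2 * (d : ℤ)| = d := by
          rcases hεL with e | e <;> rw [e] <;> simp
        have h2 : |E.ε 2 * (c : ℤ)| = c := by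
          rcases hεE with e | e <;> rw [e] <;> simp
        calc |L.ε 2 * (d : ℤ) - E.ε 2 * c| ≤ |L.ε 2 * (d : ℤ)| + |E.ε 2 * (c : ℤ)| :=
              abs_sub _ _
          _ = (d : ℤ) + c := by rw [h1, h2]
          _ < 2 * b := by push_cast; omega
      rw [abs_mul, abs_of_nonneg hb0.le] at habs
      have htabs : |t| < 2 := lt_of_mul_lt_mul_left (by linarith [habs]) hb0.le
      have htabs' : -2 < t ∧ t < 2 := abs_lt.mp htabs
      have ht3 : t = -1 ∨ t = 0 ∨ t = 1 := by omega
      rcases hεL with e | e <;> rcases hεE with f | f <;> rw [e, f] at hkey <;>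
        rcases ht3 with h | h | h <;> rw [h] at hkey <;> omega
    rcases hcd with hcd | hcd
    · -- equal first remainders : compare the tails
      have hdx2 : d = E.x 2 := by rw [← hcd]
      have := ih b d ((E.tail_s5 hEm2).retarget (a' := b) (b' := d) E.hx1.symm hdx2)
        ((L.tail_s5 hLm).retarget L.hx1.symm rfl)
        (by simp only [retarget_m, tail_m]; omega)
        (retarget_isLAR' _ _ _ (tail_isLAR' L hLm hL))
      simp only [retarget_m, tail_m] at this
      omega
    · -- complementary first remainders : use the complement lemma on E's tail
      obtain ⟨F, hFm⟩ := comp k b c ((E.tail_s5 hEm2).retarget E.hx1.symm rfl)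
        (by simp only [retarget_m, tail_m]; omega) hcb (by omega)
      have := ih b d (F.retarget rfl (by omega))
        ((L.tail_s5 hLm).retarget L.hx1.symm rfl)
        (by simp only [retarget_m, tail_m] at hFm ⊢; omega)
        (retarget_isLAR' _ _ _ (tail_isLAR' L hLm hL))
      simp only [retarget_m, tail_m] at this hFm
      omega

end GenEuclid

/-- Kronecker's theorem: for positive integers `a > b`, the number of divisions of the
method of least absolute remainders on `(a, b)` is at most the number of divisions of
any generalized Euclidean algorithm on `(a, b)`. -/
theorem kronecker (a b : ℕ) (hb : 0 < b) (hba : b < a)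
    (L E : GenEuclid a b) (hL : L.IsLAR') :
    L.m ≤ E.m :=
  GenEuclid.kron_aux E.m a b E L (le_refl _) hL
end

section
/- Let a > b be positive integers, let n be the number of divisions of the regular Euclidean algorithm on (a,b), and let m be the number of divisions of the method of least absolute remainders on (a,b) with signs ε₂,…,ε_m ∈ {−1,+1}. Then n − m equals the number of indices i with ε_i = −1, i.e. n − m = (1/2) Σ_{i=2}^{m} (|ε_i| − ε_i). -/

def regLen (a b : ℕ) : ℕ :=
  if h : b = 0 then 0
  else if a % b = 0 then 1
  else 1 + regLen b (a % b)
termination_by b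
decreasing_by exact Nat.mod_lt _ (Nat.pos_of_ne_zero h)

def larLen (a b : ℕ) : ℕ :=
  if h : b = 0 then 0
  else if h2 : a % b = 0 then 1
  else if 2 * (a % b) ≤ b then 1 + larLen b (a % b)
  else 1 + larLen b (b - a % b)
termination_by b
decreasing_by
  · exact Nat.mod_lt _ (Nat.pos_of_ne_zero h)
  · exact Nat.sub_lt (Nat.pos_of_ne_zero h) (Nat.pos_of_ne_zero h2)

def larNeg (a b : ℕ) : ℕ :=
  if h : b = 0 then 0
  else if h2 : a % b = 0 then 0
  else if 2 * (a % b) ≤ b then larNeg b (a % b)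
  else 1 + larNeg b (b - a % b)
termination_by b
decreasing_by
  · exact Nat.mod_lt _ (Nat.pos_of_ne_zero h)
  · exact Nat.sub_lt (Nat.pos_of_ne_zero h) (Nat.pos_of_ne_zero h2)

lemma regLen_dvd {a b : ℕ} (hb : b ≠ 0) (hs : a % b = 0) : regLen a b = 1 := by
  rw [regLen]; simp [hb, hs]

lemma regLen_rec {a b : ℕ} (hb : b ≠ 0) (hs : a % b ≠ 0) :
    regLen a b = 1 + regLen b (a % b) := by
  rw [regLen]; simp [hb, hs]

lemma larLen_dvd {a b : ℕ} (hb : b ≠ 0) (hs : a % b = 0) : larLen a b = 1 := by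
  rw [larLen]; simp [hb, hs]

lemma larLen_pos {a b : ℕ} (hb : b ≠ 0) (hs : a % b ≠ 0) (h2 : 2 * (a % b) ≤ b) :
    larLen a b = 1 + larLen b (a % b) := by
  rw [larLen]; simp [hb, hs, h2]

lemma larLen_neg {a b : ℕ} (hb : b ≠ 0) (hs : a % b ≠ 0) (h2 : ¬ 2 * (a % b) ≤ b) :
    larLen a b = 1 + larLen b (b - a % b) := by
  rw [larLen]; simp [hb, hs, h2]

lemma larNeg_dvd {a b : ℕ} (hb : b ≠ 0) (hs : a % b = 0) : larNeg a b = 0 := by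
  rw [larNeg]; simp [hb, hs]

lemma larNeg_pos {a b : ℕ} (hb : b ≠ 0) (hs : a % b ≠ 0) (h2 : 2 * (a % b) ≤ b) :
    larNeg a b = larNeg b (a % b) := by
  rw [larNeg]; simp [hb, hs, h2]

lemma larNeg_neg {a b : ℕ} (hb : b ≠ 0) (hs : a % b ≠ 0) (h2 : ¬ 2 * (a % b) ≤ b) :
    larNeg a b = 1 + larNeg b (b - a % b) := by
  rw [larNeg]; simp [hb, hs, h2]

lemma larLen_mod_congr {a a' b : ℕ} (h : a % b = a' % b) : larLen a b = larLen a' b := by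
  conv_lhs => rw [larLen]
  conv_rhs => rw [larLen]
  rw [h]

lemma larNeg_mod_congr {a a' b : ℕ} (h : a % b = a' % b) : larNeg a b = larNeg a' b := by
  conv_lhs => rw [larNeg]
  conv_rhs => rw [larNeg]
  rw [h]

lemma reg_eq_lar : ∀ b, 0 < b → ∀ a, regLen a b = larLen a b + larNeg a b := by
  intro b
  induction b using Nat.strong_induction_on with
  | _ b IH =>
    intro hb a
    have hb' : b ≠ 0 := hb.ne'
    by_cases hs : a % b = 0
    · rw [regLen_dvd hb' hs, larLen_dvd hb' hs, larNeg_dvd hb' hs]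
    · have hslt : a % b < b := Nat.mod_lt _ hb
      have hspos : 0 < a % b := Nat.pos_of_ne_zero hs
      by_cases h2 : 2 * (a % b) ≤ b
      · rw [regLen_rec hb' hs, larLen_pos hb' hs h2, larNeg_pos hb' hs h2]
        have := IH (a % b) hslt hspos b
        omega
      · rw [regLen_rec hb' hs, larLen_neg hb' hs h2, larNeg_neg hb' hs h2]
        set s := a % b with hsdef
        set r := b - s with hrdef
        have hrpos : 0 < r := by omega
        have hrs : r < s := by omega
        have hbs : b % s = r := by
          have hb2 : b = s * 1 + r := by omega
          rw [hb2, Nat.mul_add_mod]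
          exact Nat.mod_eq_of_lt hrs
        have hreg : regLen b s = 1 + regLen s r := by
          rw [regLen_rec hspos.ne' (by rw [hbs]; exact hrpos.ne'), hbs]
        have hmod : b % r = s % r := by
          have hb2 : b = r * 1 + s := by omega
          rw [hb2, Nat.mul_add_mod]
        have h1 : larLen b r = larLen s r := larLen_mod_congr hmod
        have h2' : larNeg b r = larNeg s r := larNeg_mod_congr hmod
        have := IH r (by omega) hrpos s
        omega

lemma reg_struct {a b : ℕ} (R : GenEuclid a b) (hR : R.IsRegular) :
    ∀ k i, 1 ≤ i → i ≤ R.m → R.m - i = k →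
      regLen (R.x (i - 1)) (R.x i) = R.m + 1 - i := by
  intro k
  induction k with
  | zero =>
    intro i h1 h2 h3
    have him : i = R.m := by omega
    have heq := R.heq i h1 h2
    rw [him, R.hxm1] at heq
    rw [← him] at heq
    have hnat : R.x (i - 1) = R.x i * R.p i := by exact_mod_cast (by push_cast at heq ⊢; linarith : (R.x (i-1) : ℤ) = (R.x i * R.p i : ℕ))
    have hxi : R.x i ≠ 0 := (R.hpos i h2).ne'
    rw [regLen_dvd hxi (by rw [hnat]; exact Nat.mul_mod_right _ _)]
    omega
  | succ k IH =>
    intro i h1 h2 h3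
    have hlt : i < R.m := by omega
    have hε1 : R.ε (i + 1) = 1 := hR (i + 1) (by omega) (by omega)
    have heq := R.heq i h1 h2
    rw [hε1] at heq
    have hnat : R.x (i - 1) = R.x i * R.p i + R.x (i + 1) := by
      exact_mod_cast (by push_cast at heq ⊢; linarith :
        (R.x (i-1) : ℤ) = (R.x i * R.p i + R.x (i + 1) : ℕ))
    have hxi : R.x i ≠ 0 := (R.hpos i h2).ne'
    have hdec := R.hdec i h1 h2
    have hxi1 : R.x (i + 1) ≠ 0 := (R.hpos (i + 1) (by omega)).ne'
    have hmod : R.x (i - 1) % R.x i = R.x (i + 1) := by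
      rw [hnat, Nat.mul_add_mod]
      exact Nat.mod_eq_of_lt hdec
    rw [regLen_rec hxi (by rw [hmod]; exact hxi1), hmod]
    have := IH (i + 1) (by omega) (by omega) (by omega)
    simp only [Nat.add_sub_cancel] at this
    omega

lemma card_filter_Icc_succ (P : ℕ → Prop) [DecidablePred P] {i m : ℕ} (h : i ≤ m) :
    ((Finset.Icc i m).filter P).card
      = (if P i then 1 else 0) + ((Finset.Icc (i + 1) m).filter P).card := by
  have : Finset.Icc i m = insert i (Finset.Icc (i + 1) m) := by
    ext y; simp; omega
  rw [this, Finset.filter_insert]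
  by_cases hP : P i
  · rw [if_pos hP, if_pos hP, Finset.card_insert_of_notMem (by simp)]; omega
  · rw [if_neg hP, if_neg hP]; omega

lemma lar_struct {a b : ℕ} (L : GenEuclid a b) (hL : L.IsLAR) :
    ∀ k i, 1 ≤ i → i ≤ L.m → L.m - i = k →
      larLen (L.x (i - 1)) (L.x i) = L.m + 1 - i ∧
      larNeg (L.x (i - 1)) (L.x i)
        = ((Finset.Icc (i + 1) L.m).filter (fun j => L.ε j = -1)).card := by
  intro k
  induction k with
  | zero =>
    intro i h1 h2 h3
    have him : i = L.m := by omega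
    have heq := L.heq i h1 h2
    rw [him, L.hxm1] at heq
    rw [← him] at heq
    have hnat : L.x (i - 1) = L.x i * L.p i := by
      exact_mod_cast (by push_cast at heq ⊢; linarith : (L.x (i-1) : ℤ) = (L.x i * L.p i : ℕ))
    have hxi : L.x i ≠ 0 := (L.hpos i h2).ne'
    have hmod : L.x (i - 1) % L.x i = 0 := by rw [hnat]; exact Nat.mul_mod_right _ _
    constructor
    · rw [larLen_dvd hxi hmod]; omega
    · rw [larNeg_dvd hxi hmod]
      rw [him]
      simp
  | succ k IH =>
    intro i h1 h2 h3
    have hlt : i < L.m := by omega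
    have hxi : L.x i ≠ 0 := (L.hpos i h2).ne'
    have hxi1 : 0 < L.x (i + 1) := L.hpos (i + 1) (by omega)
    have hdec := L.hdec i h1 h2
    obtain ⟨hhalf, htie⟩ := hL i h1 h2
    have heq := L.heq i h1 h2
    have hIH := IH (i + 1) (by omega) (by omega) (by omega)
    simp only [Nat.add_sub_cancel] at hIH
    rcases L.hε (i + 1) (by omega) (by omega) with hε1 | hε1
    · -- positive sign
      rw [hε1] at heq
      have hnat : L.x (i - 1) = L.x i * L.p i + L.x (i + 1) := by
        exact_mod_cast (by push_cast at heq ⊢; linarith :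
          (L.x (i-1) : ℤ) = (L.x i * L.p i + L.x (i + 1) : ℕ))
      have hmod : L.x (i - 1) % L.x i = L.x (i + 1) := by
        rw [hnat, Nat.mul_add_mod]; exact Nat.mod_eq_of_lt hdec
      have hs : L.x (i - 1) % L.x i ≠ 0 := by rw [hmod]; exact hxi1.ne'
      have h2' : 2 * (L.x (i - 1) % L.x i) ≤ L.x i := by rw [hmod]; exact hhalf
      constructor
      · rw [larLen_pos hxi hs h2', hmod]; omega
      · rw [larNeg_pos hxi hs h2', hmod, hIH.2,
          card_filter_Icc_succ _ (by omega : i + 1 ≤ L.m), if_neg (by rw [hε1]; decide)]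
        omega
    · -- negative sign
      rw [hε1] at heq
      have hp1 : 1 ≤ L.p i := L.hp i h1 h2
      obtain ⟨t, ht⟩ : ∃ t, L.p i = t + 1 := ⟨L.p i - 1, by omega⟩
      have hnat : L.x (i - 1) + L.x (i + 1) = L.x i * L.p i := by
        exact_mod_cast (by push_cast at heq ⊢; linarith :
          ((L.x (i - 1) + L.x (i + 1) : ℕ) : ℤ) = (L.x i * L.p i : ℕ))
      rw [ht, Nat.mul_add, Nat.mul_one] at hnat
      have hstrict : 2 * L.x (i + 1) < L.x i := by
        rcases Nat.lt_or_ge (2 * L.x (i + 1)) (L.x i) with h | h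
        · exact h
        · exfalso
          have : 2 * L.x (i + 1) = L.x i := by omega
          have := htie this
          rw [hε1] at this
          exact absurd this (by decide)
      have hnat2 : L.x (i - 1) = L.x i * t + (L.x i - L.x (i + 1)) := by
        set c := L.x i * t; omega
      have hmod : L.x (i - 1) % L.x i = L.x i - L.x (i + 1) := by
        rw [hnat2, Nat.mul_add_mod]
        exact Nat.mod_eq_of_lt (by omega)
      have hs : L.x (i - 1) % L.x i ≠ 0 := by rw [hmod]; omega
      have h2' : ¬ 2 * (L.x (i - 1) % L.x i) ≤ L.x i := by rw [hmod]; omega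
      have hsub : L.x i - L.x (i - 1) % L.x i = L.x (i + 1) := by rw [hmod]; omega
      constructor
      · rw [larLen_neg hxi hs h2', hsub]; omega
      · rw [larNeg_neg hxi hs h2', hsub, hIH.2,
          card_filter_Icc_succ _ (by omega : i + 1 ≤ L.m), if_pos hε1]

/-- Goodman–Zaring (1952): for positive integers `a > b`, if the regular Euclidean
algorithm on `(a, b)` has `n` divisions and the method of least absolute remainders
has `m` divisions with signs `ε`, then `n - m` equals the number of negative signs,
i.e. `n - m = (1/2) * ∑ i in [2, m], (|ε i| - ε i)`. -/
theorem goodman_zaring (a b : ℕ) (hb : 0 < b) (hba : b < a)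
    (R L : GenEuclid a b) (hR : R.IsRegular) (hL : L.IsLAR) :
    (R.m : ℤ) - (L.m : ℤ)
        = ((Finset.Icc 2 L.m).filter (fun i => L.ε i = -1)).card ∧
    2 * ((R.m : ℤ) - (L.m : ℤ)) = ∑ i ∈ Finset.Icc 2 L.m, (|L.ε i| - L.ε i) := by
  
  have hRn : regLen a b = R.m := by
    have := reg_struct R hR (R.m - 1) 1 le_rfl R.hm rfl
    simpa [R.hx0, R.hx1] using this
  have hLn : larLen a b = L.m := by
    have := (lar_struct L hL (L.m - 1) 1 le_rfl L.hm rfl).1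
    simpa [L.hx0, L.hx1] using this
  have hLc : larNeg a b = ((Finset.Icc 2 L.m).filter (fun i => L.ε i = -1)).card := by
    have := (lar_struct L hL (L.m - 1) 1 le_rfl L.hm rfl).2
    simpa [L.hx0, L.hx1] using this
  have hkey := reg_eq_lar b hb a
  have h1 : (R.m : ℤ) - (L.m : ℤ)
      = ((Finset.Icc 2 L.m).filter (fun i => L.ε i = -1)).card := by
    have hc : R.m = L.m + ((Finset.Icc 2 L.m).filter (fun i => L.ε i = -1)).card := by
      omega
    rw [hc]
    push_cast
    ring
  refine ⟨h1, ?_⟩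
  have hsum : ∑ i ∈ Finset.Icc 2 L.m, (|L.ε i| - L.ε i)
      = ∑ i ∈ Finset.Icc 2 L.m, (if L.ε i = -1 then (2 : ℤ) else 0) := by
    refine Finset.sum_congr rfl fun i hi => ?_
    rcases L.hε i (Finset.mem_Icc.mp hi).1 (Finset.mem_Icc.mp hi).2 with h | h <;>
      simp [h]
  rw [hsum, ← Finset.sum_filter, Finset.sum_const, nsmul_eq_mul, h1]; ring
end

section
/- For every rational number q ≥ 1 there exists a finite sequence of moves, each move being either x ↦ x − 1 or x ↦ −1/x (the latter applied only when x ≠ 0), transforming q into 0. In other words, every rational tangle with tangle number at least 1 can be untangled using twists in only one direction together with rotations. -/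
/-- A restricted untangling move on a tangle number: a negative twist `x ↦ x - 1`
or a rotation `x ↦ -1/x` (only when `x ≠ 0`). -/
inductive RestrictedMove : ℚ → ℚ → Prop
  | sub (x : ℚ) : RestrictedMove x (x - 1)
  | rot (x : ℚ) (h : x ≠ 0) : RestrictedMove x (-x⁻¹)

lemma restricted_sub_many (q : ℚ) (n : ℕ) :
    Relation.ReflTransGen RestrictedMove q (q - n) := by
  induction n with
  | zero => simpa using Relation.ReflTransGen.refl
  | succ k ih =>
      refine ih.tail ?_
      have h : q - (k + 1 : ℕ) = (q - k) - 1 := by push_cast; ring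
      rw [h]
      exact RestrictedMove.sub _

lemma den_inv_of_pos (x : ℚ) (hx : 0 < x) : (x⁻¹.den : ℤ) = x.num := by
  have hnum : 0 < x.num := Rat.num_pos.mpr hx
  have h : x⁻¹ = (x.den : ℚ) / (x.num : ℚ) := by
    rw [Rat.inv_def, Rat.divInt_eq_div]
    norm_cast
  rw [h]
  exact Rat.den_div_eq_of_coprime hnum (by simpa using x.reduced.symm)

/-- Every rational number `q ≥ 1` can be transformed into `0` by a finite sequence of
moves `x ↦ x - 1` and `x ↦ -1/x`: every rational tangle with tangle number at least
`1` can be untangled using twists in only one direction together with rotations. -/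
theorem restricted_untangle (q : ℚ) (hq : 1 ≤ q) :
    Relation.ReflTransGen RestrictedMove q 0 := by
  have H : ∀ d : ℕ, ∀ q : ℚ, 1 ≤ q → q.den = d → Relation.ReflTransGen RestrictedMove q 0 := by
    intro d
    induction d using Nat.strong_induction_on with
    | _ d ih =>
      intro q hq hd
      by_cases hden : q.den = 1
      · obtain ⟨n, hn⟩ : ∃ n : ℕ, q = n := by
          lift q to ℤ using hden with m
          refine ⟨m.toNat, ?_⟩
          have : (0:ℚ) ≤ (m:ℚ) := by linarith
          have hm : 0 ≤ m := by exact_mod_cast this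
          exact_mod_cast (Int.toNat_of_nonneg hm).symm
        rw [hn]
        have h := restricted_sub_many (n:ℚ) n
        rwa [sub_self] at h
      · set n : ℤ := ⌈q⌉ with hn
        have h1 : q ≤ n := Int.le_ceil q
        have h2 : (n : ℚ) < q + 1 := Int.ceil_lt_add_one q
        have hne : q ≠ (n : ℚ) := by
          intro h
          exact hden (by rw [h, Rat.den_intCast])
        have hlt : q < n := lt_of_le_of_ne h1 hne
        have hn0 : 0 ≤ n := by
          have : (0:ℚ) ≤ (n:ℚ) := by linarith
          exact_mod_cast this
        have step1 : Relation.ReflTransGen RestrictedMove q (q - n) := by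
          have h := restricted_sub_many q n.toNat
          have hc : ((n.toNat : ℚ)) = (n : ℚ) := by
            exact_mod_cast congrArg (Int.cast : ℤ → ℚ) (Int.toNat_of_nonneg hn0)
          rwa [hc] at h
        set x : ℚ := (n : ℚ) - q with hx
        have hx0 : 0 < x := by simp [hx]; linarith
        have hx1 : x < 1 := by simp [hx]; linarith
        have hqn0 : q - n ≠ 0 := sub_ne_zero.mpr hne
        have step2 : RestrictedMove (q - n) (-(q - n)⁻¹) := RestrictedMove.rot _ hqn0
        have hrw : -(q - (n:ℚ))⁻¹ = x⁻¹ := by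
          rw [hx, ← neg_sub q (n:ℚ), inv_neg]
        rw [hrw] at step2
        -- x⁻¹ ≥ 1 and its denominator is smaller
        have hge : 1 ≤ x⁻¹ := one_le_inv_iff₀.mpr ⟨hx0, hx1.le⟩
        have hdeninv : ((x⁻¹.den : ℤ)) = x.num := den_inv_of_pos x hx0
        have hnumlt : x.num < x.den := by
          by_contra h
          push_neg at h
          have : (1:ℚ) ≤ x := by
            rw [← Rat.num_div_den x]
            rw [le_div_iff₀ (by exact_mod_cast x.pos : (0:ℚ) < (x.den:ℚ))]
            rw [one_mul]
            exact_mod_cast h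
          linarith
        have hdenle : x.den ≤ q.den := by
          have hd : x.den ∣ ((n:ℚ)).den * (-q).den := by
            rw [hx, sub_eq_add_neg]
            exact Rat.add_den_dvd _ _
          simp only [Rat.den_intCast, Rat.neg_den, one_mul] at hd
          exact Nat.le_of_dvd q.pos hd
        have hdenlt : x⁻¹.den < q.den := by
          have : (x⁻¹.den : ℤ) < (q.den : ℤ) := by
            rw [hdeninv]
            calc x.num < (x.den : ℤ) := hnumlt
              _ ≤ (q.den : ℤ) := by exact_mod_cast hdenle
          exact_mod_cast this
        exact step1.trans ((Relation.ReflTransGen.single step2).trans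
          (ih x⁻¹.den (hd ▸ hdenlt) x⁻¹ hge rfl))
  exact H q.den q hq rfl
end
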